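/- Let P be a convex polytope in R^d, v a vertex of P, u ∈ P farthest from v, w ∈ P farthest from u, and let x be the point on the ray from u through v at distance dist(u,w)/2 from u. Let y ∈ P be farthest from x and z ∈ P farthest from y. Then diam(P)/(2√2/√3) ≤ max{dist(u,w), dist(y,z)} ≤ diam(P). -/

import Mathlib

open Real Metric EuclideanGeometry

lemma aux_ball {d : ℕ} (u v x a : EuclideanSpace ℝ (Fin d)) (t R : ℝ) (ht : 0 ≤ t)
    (hx : x = u + t • (v - u))
    (hxu : dist u x = R / 2)
    (hvu : dist u v ≤ R)
    (hau : dist u a ≤ R)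
    (hav : dist v a ≤ dist v u) :
    (dist x a)^2 ≤ 3/4 * R^2 := by
  have hR : 0 ≤ R := le_trans dist_nonneg hau
  have hA0 : (0:ℝ) ≤ ‖u - a‖ := norm_nonneg _
  have hB0 : (0:ℝ) ≤ ‖v - u‖ := norm_nonneg _
  have hxa : (dist x a)^2 = ‖u - a‖^2 + 2*t*(inner ℝ (u - a) (v - u) : ℝ) + t^2*‖v - u‖^2 := by
    have hxa' : x - a = (u - a) + t • (v - u) := by rw [hx]; abel
    rw [dist_eq_norm, hxa', norm_add_sq_real, real_inner_smul_right, norm_smul,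
      Real.norm_eq_abs, abs_of_nonneg ht, mul_pow]
    ring
  have h2 : 2*(inner ℝ (u - a) (v - u) : ℝ) ≤ -‖u - a‖^2 := by
    have hva : v - a = (v - u) + (u - a) := by abel
    have h := hav
    rw [dist_eq_norm, dist_eq_norm] at h
    have hsq : ‖v - a‖^2 ≤ ‖v - u‖^2 := by
      have := mul_le_mul h h (norm_nonneg _) (norm_nonneg _)
      nlinarith [this]
    rw [hva, norm_add_sq_real] at hsq
    have hcomm : (inner ℝ (v - u) (u - a) : ℝ) = (inner ℝ (u - a) (v - u) : ℝ) :=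
      real_inner_comm _ _
    nlinarith [hsq, hcomm]
  have h3 : t * ‖v - u‖ = R / 2 := by
    have : u - x = -(t • (v - u)) := by rw [hx]; abel
    rw [dist_eq_norm, this, norm_neg, norm_smul, Real.norm_eq_abs, abs_of_nonneg ht] at hxu
    exact hxu
  have hA : ‖u - a‖ ≤ R := by rwa [dist_eq_norm] at hau
  have hB : ‖v - u‖ ≤ R := by rw [dist_eq_norm] at hvu; rwa [norm_sub_rev]
  rw [hxa]
  rcases le_or_gt t 1 with h1 | h1
  · nlinarith [mul_le_mul_of_nonneg_left h2 ht, h3,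
      mul_le_mul_of_nonneg_left hB ht,
      mul_nonneg (sub_nonneg.2 h1) (sub_nonneg.2 (mul_le_mul hA hA hA0 hR)),
      mul_nonneg hR hR, mul_nonneg ht hB0]
  · nlinarith [mul_le_mul_of_nonneg_left h2 ht, sq_nonneg (‖u - a‖),
      mul_nonneg (le_of_lt (sub_pos.2 h1)) (mul_nonneg hA0 hA0)]

lemma aux_par {d : ℕ} (p q c m : EuclideanSpace ℝ (Fin d))
    (hm : m = (1/2 : ℝ) • p + (1/2 : ℝ) • q) :
    dist p q ^ 2 + 4 * dist m c ^ 2 = 2 * dist p c ^ 2 + 2 * dist q c ^ 2 := by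
  have key := parallelogram_law_with_norm ℝ (p - c) (q - c)
  have h1 : m - c = (1/2 : ℝ) • ((p - c) + (q - c)) := by rw [hm]; module
  have h2 : ‖m - c‖ = 1/2 * ‖(p - c) + (q - c)‖ := by
    rw [h1, norm_smul, Real.norm_eq_abs]; norm_num
  have h3 : p - q = (p - c) - (q - c) := by abel
  rw [dist_eq_norm, dist_eq_norm, dist_eq_norm, dist_eq_norm, h3, h2]
  ring_nf
  ring_nf at key
  nlinarith [key]

lemma aux_alg (D b s g L M : ℝ) (hM0 : 0 ≤ M) (hb0 : 0 ≤ b) (hs0 : 0 ≤ s)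
    (e2 : D^2 + 4*g^2 ≤ 4*s^2) (h4 : (s - b)^2 ≤ g^2)
    (e1 : D^2 + 4*b^2 ≤ 4*L^2) (hL2 : L^2 ≤ M^2) (hs2 : s^2 ≤ 3/4*M^2) :
    D^2 ≤ 8/3*M^2 := by
  rcases le_or_gt (b^2) (M^2/3) with hbc | hbc
  · have h7 : D^2 ≤ 8*s*b - 4*b^2 := by nlinarith [e2, h4]
    nlinarith [h7, hs2, hbc, sq_nonneg (2*s - 3*b)]
  · linarith

set_option maxHeartbeats 1000000 in
theorem stmt_4 {d : ℕ} (P : Set (EuclideanSpace ℝ (Fin d)))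
    (hPc : IsCompact P) (hPconv : Convex ℝ P)
    (v u w x y z : EuclideanSpace ℝ (Fin d))
    (hv : v ∈ Set.extremePoints ℝ P)
    (hu : u ∈ P) (hufar : ∀ a ∈ P, dist v a ≤ dist v u)
    (hw : w ∈ P) (hwfar : ∀ a ∈ P, dist u a ≤ dist u w)
    (hray : ∃ t : ℝ, 0 ≤ t ∧ x = u + t • (v - u))
    (hxdist : dist u x = dist u w / 2)
    (hy : y ∈ P) (hyfar : ∀ a ∈ P, dist x a ≤ dist x y)
    (hz : z ∈ P) (hzfar : ∀ a ∈ P, dist y a ≤ dist y z) :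
    Metric.diam P / (2 * Real.sqrt 2 / Real.sqrt 3) ≤ max (dist u w) (dist y z) ∧
      max (dist u w) (dist y z) ≤ Metric.diam P := by
  have hPb := hPc.isBounded
  have hvP : v ∈ P := hv.1
  set R := dist u w with hRdef
  set L := dist y z with hLdef
  have hR0 : (0:ℝ) ≤ R := dist_nonneg
  have hL0 : (0:ℝ) ≤ L := dist_nonneg
  set M := max R L with hMdef
  have hRM : R ≤ M := le_max_left _ _
  have hLM : L ≤ M := le_max_right _ _
  have hM0 : (0:ℝ) ≤ M := le_trans hR0 hRM
  have hup : max R L ≤ Metric.diam P :=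
    max_le (dist_le_diam_of_mem hPb hu hw) (dist_le_diam_of_mem hPb hy hz)
  obtain ⟨t, ht, hx⟩ := hray
  have hball : ∀ a ∈ P, (dist x a)^2 ≤ 3/4 * R^2 := fun a ha =>
    aux_ball u v x a t R ht hx hxdist (hwfar v hvP) (hwfar a ha) (hufar a ha)
  have hRM2 : R^2 ≤ M^2 := by nlinarith [hRM, hR0]
  have hs2 : dist x y ^ 2 ≤ 3/4 * M^2 := by linarith [hball y hy]
  have hpair : ∀ p ∈ P, ∀ q ∈ P, dist p q ≤ 2 * Real.sqrt 2 / Real.sqrt 3 * M := by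
    intro p hp q hq
    set m : EuclideanSpace ℝ (Fin d) := (1/2 : ℝ) • p + (1/2 : ℝ) • q with hmdef
    have hmP : m ∈ P := hPconv hp hq (by norm_num) (by norm_num) (by norm_num)
    have e1 := aux_par p q y m hmdef
    have e2 := aux_par p q x m hmdef
    have hpy : dist p y ≤ L := by rw [dist_comm]; exact hzfar p hp
    have hqy : dist q y ≤ L := by rw [dist_comm]; exact hzfar q hq
    have hpx : dist p x ≤ dist x y := by rw [dist_comm]; exact hyfar p hp
    have hqx : dist q x ≤ dist x y := by rw [dist_comm]; exact hyfar q hq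
    have hbL : dist m y ≤ L := by rw [dist_comm]; exact hzfar m hmP
    have h4 : (dist x y - dist m y)^2 ≤ dist m x ^ 2 := by
      have h := abs_dist_sub_le x m y
      have : |dist x y - dist m y| ^ 2 ≤ dist x m ^ 2 :=
        pow_le_pow_left₀ (abs_nonneg _) h 2
      rw [sq_abs] at this
      rwa [dist_comm m x]
    have hb0 : (0:ℝ) ≤ dist m y := dist_nonneg
    have hsy0 : (0:ℝ) ≤ dist x y := dist_nonneg
    have key : dist p q ^ 2 ≤ 8/3 * M^2 := by
      have e2' : dist p q ^2 + 4 * dist m x ^2 ≤ 4 * dist x y ^2 := by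
        have h5 : dist p x ^2 ≤ dist x y ^2 := pow_le_pow_left₀ dist_nonneg hpx 2
        have h6 : dist q x ^2 ≤ dist x y ^2 := pow_le_pow_left₀ dist_nonneg hqx 2
        linarith [e2]
      have e1' : dist p q ^2 + 4 * dist m y ^2 ≤ 4 * L^2 := by
        have h5 : dist p y ^2 ≤ L^2 := pow_le_pow_left₀ dist_nonneg hpy 2
        have h6 : dist q y ^2 ≤ L^2 := pow_le_pow_left₀ dist_nonneg hqy 2
        linarith [e1]
      have hL2 : L^2 ≤ M^2 := pow_le_pow_left₀ hL0 hLM 2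
      exact aux_alg (dist p q) (dist m y) (dist x y) (dist m x) L M hM0 hb0 hsy0
        (by linarith) (by nlinarith [h4]) (by linarith) hL2 (by linarith)
    have hc2 : (2 * Real.sqrt 2 / Real.sqrt 3 * M)^2 = 8/3 * M^2 := by
      rw [mul_pow, div_pow, mul_pow, Real.sq_sqrt (by norm_num : (0:ℝ) ≤ 2),
        Real.sq_sqrt (by norm_num : (0:ℝ) ≤ 3)]
      ring
    have hfin : dist p q ^ 2 ≤ (2 * Real.sqrt 2 / Real.sqrt 3 * M)^2 := by
      rw [hc2]; exact key
    have hcM : (0:ℝ) ≤ 2 * Real.sqrt 2 / Real.sqrt 3 * M := by positivity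
    exact le_of_pow_le_pow_left₀ two_ne_zero hcM hfin
  have hdiam : Metric.diam P ≤ 2 * Real.sqrt 2 / Real.sqrt 3 * M :=
    Metric.diam_le_of_forall_dist_le (by positivity) hpair
  constructor
  · rw [div_le_iff₀ (by positivity : (0:ℝ) < 2 * Real.sqrt 2 / Real.sqrt 3)]
    calc Metric.diam P ≤ 2 * Real.sqrt 2 / Real.sqrt 3 * M := hdiam
      _ = M * (2 * Real.sqrt 2 / Real.sqrt 3) := by ring
  · exact hup
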